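/- Let m > 0. The limit δm := lim_{q → 0⁺} δE(q) exists and is a finite real number (the renormalised second-order mass correction). -/

import Mathlib

open MeasureTheory

/-- The one-particle energy `ω(p) = √(p² + m²)`. -/
noncomputable def ω (m p : ℝ) : ℝ := Real.sqrt (p ^ 2 + m ^ 2)

/-- `Ω(p,q,θ) = √(p² + q² + 2pq cos θ + m²)` in spherical coordinates. -/
noncomputable def Ω (m p q c : ℝ) : ℝ := Real.sqrt (p ^ 2 + q ^ 2 + 2 * p * q * c + m ^ 2)

/-- Integrand of the noncommutative second-order energy correction in spherical
coordinates (`c = cos θ`). -/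
noncomputable def F (m q p c : ℝ) : ℝ :=
  p ^ 2 * Real.exp (-(10 / 3) * p ^ 2) * Real.exp (-(8 / 3) * q * p * c) *
    Real.exp (-(ω m p) * Ω m p q c + ω m p * ω m q) / (ω m p * Ω m p q c) *
    (Real.exp (Ω m p q c * ω m q) / (ω m p + Ω m p q c - ω m q) +
      Real.exp (-(Ω m p q c) * ω m q) / (ω m p + Ω m p q c + ω m q))

/-- The noncommutative second-order energy correction `δE(q)`. -/
noncomputable def δE (m q : ℝ) : ℝ :=
  Real.exp (-(10 / 3) * q ^ 2 - 2 * m) / (16 * (2 * Real.pi) ^ 5 * ω m q) *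
    ∫ p in Set.Ioi (0 : ℝ), ∫ c in (-1 : ℝ)..1, F m q p c

namespace Stmt8Aux

lemma sqrt_bound {x y : ℝ} (hy : 0 ≤ y) (h : x ≤ y ^ 2) : Real.sqrt x ≤ y := by
  calc Real.sqrt x ≤ Real.sqrt (y ^ 2) := Real.sqrt_le_sqrt h
    _ = y := Real.sqrt_sq hy

variable {m p q c : ℝ}

lemma le_omega (hm : 0 ≤ m) (p : ℝ) : m ≤ ω m p := by
  calc m = Real.sqrt (m ^ 2) := (Real.sqrt_sq hm).symm
    _ ≤ _ := Real.sqrt_le_sqrt (by nlinarith [sq_nonneg p])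

lemma omega_nonneg (m p : ℝ) : 0 ≤ ω m p := Real.sqrt_nonneg _
lemma Omega_nonneg (m p q c : ℝ) : 0 ≤ Ω m p q c := Real.sqrt_nonneg _

lemma omega_le (hm : 0 ≤ m) (p : ℝ) : ω m p ≤ |p| + m :=
  sqrt_bound (by positivity) (by nlinarith [sq_abs p, abs_nonneg p, mul_nonneg (abs_nonneg p) hm])

lemma pqc_bound (hc : |c| ≤ 1) : |p * q * c| ≤ |p| * |q| := by
  rw [abs_mul, abs_mul]
  have h0 : (0:ℝ) ≤ |p| * |q| := by positivity
  nlinarith [abs_nonneg c]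

lemma arg_nonneg (hc : |c| ≤ 1) : m ^ 2 ≤ p ^ 2 + q ^ 2 + 2 * p * q * c + m ^ 2 := by
  have h := (abs_le.mp (pqc_bound (p := p) (q := q) hc)).1
  nlinarith [sq_nonneg (|p| - |q|), sq_abs p, sq_abs q]

lemma le_Omega (hm : 0 ≤ m) (hc : |c| ≤ 1) : m ≤ Ω m p q c := by
  calc m = Real.sqrt (m ^ 2) := (Real.sqrt_sq hm).symm
    _ ≤ _ := Real.sqrt_le_sqrt (arg_nonneg hc)

lemma Omega_le (hm : 0 ≤ m) (hc : |c| ≤ 1) : Ω m p q c ≤ |p| + |q| + m := by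
  have h := (abs_le.mp (pqc_bound (p := p) (q := q) hc)).2
  refine sqrt_bound (by positivity) ?_
  nlinarith [sq_abs p, sq_abs q, abs_nonneg p, abs_nonneg q,
    mul_nonneg (abs_nonneg p) hm, mul_nonneg (abs_nonneg q) hm,
    mul_nonneg (abs_nonneg p) (abs_nonneg q)]

lemma omega_le_Omega (hc : |c| ≤ 1) : ω m q ≤ Ω m p q c + |q| := by
  have harg : 0 ≤ p ^ 2 + q ^ 2 + 2 * p * q * c + m ^ 2 :=
    le_trans (sq_nonneg m) (arg_nonneg hc)
  have hsq : (Ω m p q c) ^ 2 = p ^ 2 + q ^ 2 + 2 * p * q * c + m ^ 2 := Real.sq_sqrt harg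
  have h := (abs_le.mp (pqc_bound (p := p) (q := q) hc)).1
  refine sqrt_bound (add_nonneg (Omega_nonneg m p q c) (abs_nonneg q)) ?_
  nlinarith [sq_nonneg (|p| - |q|), sq_abs p, sq_abs q, abs_nonneg q, Omega_nonneg m p q c,
    mul_nonneg (Omega_nonneg m p q c) (abs_nonneg q)]

lemma denom1 (hm : 0 < m) (hq : |q| ≤ m / 2) (hc : |c| ≤ 1) :
    m / 2 ≤ ω m p + Ω m p q c - ω m q := by
  have h1 := le_omega (m := m) hm.le p
  have h2 := omega_le_Omega (m := m) (p := p) (q := q) hc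
  linarith

/-- The dominating function. -/
noncomputable def Bnd (m p : ℝ) : ℝ :=
  p ^ 2 * Real.exp (-(10 / 3) * p ^ 2) * Real.exp (8 / 3 * |p|) *
      Real.exp ((|p| + m) * (1 + m)) / (m * m) *
    (Real.exp ((|p| + 1 + m) * (1 + m)) / (m / 2) +
      Real.exp ((|p| + 1 + m) * (1 + m)) / m)

lemma norm_F_le (hm : 0 < m) (hq : |q| ≤ min 1 (m / 2)) (hc : |c| ≤ 1) (p : ℝ) :
    ‖F m q p c‖ ≤ Bnd m p := by
  obtain ⟨hq1, hq2⟩ := le_min_iff.mp hq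
  have hωp := le_omega hm.le p
  have hωp0 : 0 < ω m p := lt_of_lt_of_le hm hωp
  have hΩ := le_Omega (p := p) (q := q) hm.le hc
  have hΩ0 : 0 < Ω m p q c := lt_of_lt_of_le hm hΩ
  have hωq0 : 0 ≤ ω m q := omega_nonneg m q
  have hωqle : ω m q ≤ 1 + m := le_trans (omega_le hm.le q) (by linarith)
  have hωple : ω m p ≤ |p| + m := omega_le hm.le p
  have hΩle : Ω m p q c ≤ |p| + 1 + m :=
    le_trans (Omega_le hm.le hc) (by linarith)
  have hd1 : m / 2 ≤ ω m p + Ω m p q c - ω m q := denom1 hm hq2 hc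
  have hd2 : m ≤ ω m p + Ω m p q c + ω m q := by linarith
  have hpabs : |q * p * c| ≤ |p| := by
    rw [abs_mul, abs_mul]
    have h0 : (0:ℝ) ≤ |q| * |p| := by positivity
    nlinarith [abs_nonneg c, abs_nonneg p, abs_nonneg q]
  have hE2 : -(8 / 3) * q * p * c ≤ 8 / 3 * |p| := by
    have h := (abs_le.mp hpabs).1
    nlinarith
  have hE3 : -(ω m p) * Ω m p q c + ω m p * ω m q ≤ (|p| + m) * (1 + m) := by
    have h1 : 0 ≤ ω m p * Ω m p q c := by positivity
    have h2 : ω m p * ω m q ≤ (|p| + m) * (1 + m) :=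
      mul_le_mul hωple hωqle hωq0 (by positivity)
    linarith
  have hnum : Ω m p q c * ω m q ≤ (|p| + 1 + m) * (1 + m) :=
    mul_le_mul hΩle hωqle hωq0 (by positivity)
  have hnum2 : -(Ω m p q c) * ω m q ≤ (|p| + 1 + m) * (1 + m) := by
    have h3 : 0 ≤ Ω m p q c * ω m q := by positivity
    nlinarith [abs_nonneg p]
  have hF0 : 0 ≤ F m q p c := by
    rw [F]
    apply mul_nonneg
    · exact div_nonneg (by positivity) (by positivity)
    · apply add_nonneg
      · exact div_nonneg (Real.exp_pos _).le (by linarith)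
      · exact div_nonneg (Real.exp_pos _).le (by linarith)
  rw [Real.norm_eq_abs, abs_of_nonneg hF0, F, Bnd]
  have hNle : p ^ 2 * Real.exp (-(10 / 3) * p ^ 2) * Real.exp (-(8 / 3) * q * p * c) *
      Real.exp (-(ω m p) * Ω m p q c + ω m p * ω m q) ≤
      p ^ 2 * Real.exp (-(10 / 3) * p ^ 2) * Real.exp (8 / 3 * |p|) *
      Real.exp ((|p| + m) * (1 + m)) := by
    gcongr
  have hDle : m * m ≤ ω m p * Ω m p q c := mul_le_mul hωp hΩ hm.le (le_of_lt hωp0)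
  refine mul_le_mul ?_ ?_ ?_ ?_
  · exact div_le_div₀ (by positivity) hNle (by positivity) hDle
  · refine add_le_add ?_ ?_
    · exact div_le_div₀ (Real.exp_pos _).le (Real.exp_le_exp.mpr hnum) (by positivity) hd1
    · exact div_le_div₀ (Real.exp_pos _).le (Real.exp_le_exp.mpr hnum2) hm hd2
  · apply add_nonneg
    · exact div_nonneg (Real.exp_pos _).le (by linarith)
    · exact div_nonneg (Real.exp_pos _).le (by linarith)
  · positivity

lemma Bnd_eq (hm : 0 < m) (p : ℝ) :
    Bnd m p = 3 / m ^ 3 * p ^ 2 *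
      Real.exp (-(10 / 3) * p ^ 2 + (8 / 3 * |p| + ((|p| + m) * (1 + m) +
        (|p| + 1 + m) * (1 + m)))) := by
  have h : m ≠ 0 := hm.ne'
  rw [Bnd, Real.exp_add, Real.exp_add, Real.exp_add]
  field_simp
  ring

lemma Bnd_le (hm : 0 < m) (p : ℝ) :
    Bnd m p ≤ 3 / m ^ 3 * Real.exp (3 / 28 * (14 / 3 + 2 * m) ^ 2 + (2 * m + 1) * (1 + m)) *
      (p ^ 2 * Real.exp (-1 * p ^ 2)) := by
  calc Bnd m p = 3 / m ^ 3 * p ^ 2 *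
      Real.exp (-(10 / 3) * p ^ 2 + (8 / 3 * |p| + ((|p| + m) * (1 + m) +
        (|p| + 1 + m) * (1 + m)))) := Bnd_eq hm p
    _ ≤ 3 / m ^ 3 * p ^ 2 * Real.exp ((3 / 28 * (14 / 3 + 2 * m) ^ 2 +
        (2 * m + 1) * (1 + m)) + -1 * p ^ 2) := by
        refine mul_le_mul_of_nonneg_left (Real.exp_le_exp.mpr ?_) (by positivity)
        nlinarith [sq_nonneg (|p| - 3 * (14 / 3 + 2 * m) / 14), sq_abs p, abs_nonneg p]
    _ = 3 / m ^ 3 * Real.exp (3 / 28 * (14 / 3 + 2 * m) ^ 2 + (2 * m + 1) * (1 + m)) *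
        (p ^ 2 * Real.exp (-1 * p ^ 2)) := by rw [Real.exp_add]; ring

lemma Bnd_nonneg (hm : 0 < m) (p : ℝ) : 0 ≤ Bnd m p := by
  rw [Bnd_eq hm p]; positivity

lemma Bnd_integrable (hm : 0 < m) :
    Integrable (Bnd m) (volume.restrict (Set.Ioi (0:ℝ))) := by
  have base : IntegrableOn (fun x : ℝ => x ^ (2:ℝ) * Real.exp (-1 * x ^ 2)) (Set.Ioi 0) :=
    integrableOn_rpow_mul_exp_neg_mul_sq one_pos (by norm_num)
  have base2 : IntegrableOn (fun x : ℝ => x ^ 2 * Real.exp (-1 * x ^ 2)) (Set.Ioi 0) := by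
    refine base.congr_fun (fun x hx => ?_) measurableSet_Ioi
    beta_reduce
    rw [show ((2:ℝ)) = ((2:ℕ):ℝ) by norm_num, Real.rpow_natCast]
  have big : Integrable (fun p => (3 / m ^ 3 * Real.exp (3 / 28 * (14 / 3 + 2 * m) ^ 2 +
      (2 * m + 1) * (1 + m))) * (p ^ 2 * Real.exp (-1 * p ^ 2)))
      (volume.restrict (Set.Ioi (0:ℝ))) := base2.const_mul _
  refine big.mono ?_ ?_
  · refine Measurable.aestronglyMeasurable ?_
    unfold Bnd; fun_prop
  · refine Filter.Eventually.of_forall (fun p => ?_)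
    rw [Real.norm_eq_abs, Real.norm_eq_abs, abs_of_nonneg (Bnd_nonneg hm p),
      abs_of_nonneg (by positivity)]
    exact Bnd_le hm p

lemma measC (m q p : ℝ) : Measurable (fun c => F m q p c) := by
  unfold F ω Ω; fun_prop

lemma measP (m q : ℝ) :
    AEStronglyMeasurable (fun p => ∫ c in (-1:ℝ)..1, F m q p c)
      (volume.restrict (Set.Ioi (0:ℝ))) := by
  have hunc : Measurable (Function.uncurry (F m q)) := by
    unfold Function.uncurry F ω Ω; fun_prop
  have heq : (fun p => ∫ c in (-1:ℝ)..1, F m q p c) =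
      fun p => ∫ c, F m q p c ∂(volume.restrict (Set.Ioc (-1:ℝ) 1)) :=
    funext fun p => intervalIntegral.integral_of_le (by norm_num)
  rw [heq]
  exact (hunc.stronglyMeasurable.integral_prod_right).aestronglyMeasurable

lemma contq (hm : 0 < m) (p c : ℝ) (hc : |c| ≤ 1) :
    ContinuousAt (fun q => F m q p c) 0 := by
  have hΩc : Continuous fun q => Ω m p q c := by unfold Ω; fun_prop
  have hωc : Continuous (ω m) := by unfold ω; fun_prop
  have hd0 : ω m p * Ω m p 0 c ≠ 0 :=
    ne_of_gt (mul_pos (lt_of_lt_of_le hm (le_omega hm.le p))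
      (lt_of_lt_of_le hm (le_Omega hm.le hc)))
  have hq0 : |(0:ℝ)| ≤ m / 2 := by simp; positivity
  have hd1 : ω m p + Ω m p 0 c - ω m 0 ≠ 0 :=
    ne_of_gt (lt_of_lt_of_le (by positivity) (denom1 hm hq0 hc))
  have hd2 : ω m p + Ω m p 0 c + ω m 0 ≠ 0 := by
    have h1 := le_omega (m := m) hm.le p
    have h2 := le_Omega (m := m) (p := p) (q := (0:ℝ)) hm.le hc
    have h3 := omega_nonneg m 0
    exact ne_of_gt (by linarith)
  unfold F
  refine ContinuousAt.mul (ContinuousAt.div ?_ ?_ hd0)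
    (ContinuousAt.add (ContinuousAt.div ?_ ?_ hd1) (ContinuousAt.div ?_ ?_ hd2))
  · exact ((continuous_const.mul (Real.continuous_exp.comp (by fun_prop))).mul
      (Real.continuous_exp.comp
        ((continuous_const.mul hΩc).add (continuous_const.mul hωc)))).continuousAt
  · exact (continuous_const.mul hΩc).continuousAt
  · exact (Real.continuous_exp.comp (hΩc.mul hωc)).continuousAt
  · exact ((continuous_const.add hΩc).sub hωc).continuousAt
  · exact (Real.continuous_exp.comp (hΩc.neg.mul hωc)).continuousAt
  · exact ((continuous_const.add hΩc).add hωc).continuousAt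

lemma contq_integral (hm : 0 < m) (p : ℝ) :
    ContinuousAt (fun q => ∫ c in (-1:ℝ)..1, F m q p c) 0 := by
  have hq0 : (0:ℝ) < min 1 (m / 2) := lt_min one_pos (half_pos hm)
  refine intervalIntegral.continuousAt_of_dominated_interval
    (Filter.Eventually.of_forall fun q => (measC m q p).aestronglyMeasurable)
    ?_ (intervalIntegrable_const (c := Bnd m p)) ?_
  · have hev : ∀ᶠ q in nhds (0:ℝ), |q| < min 1 (m / 2) := by
      have := eventually_abs_sub_lt (0:ℝ) hq0
      simpa using this
    filter_upwards [hev] with q hq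
    refine Filter.Eventually.of_forall fun c hcmem => ?_
    have hcc : |c| ≤ 1 := by
      rw [Set.uIoc_of_le (by norm_num : (-1:ℝ) ≤ 1)] at hcmem
      exact abs_le.mpr ⟨hcmem.1.le, hcmem.2⟩
    exact norm_F_le hm hq.le hcc p
  · refine Filter.Eventually.of_forall fun c hcmem => ?_
    have hcc : |c| ≤ 1 := by
      rw [Set.uIoc_of_le (by norm_num : (-1:ℝ) ≤ 1)] at hcmem
      exact abs_le.mpr ⟨hcmem.1.le, hcmem.2⟩
    exact contq hm p c hcc

end Stmt8Aux

open Stmt8Aux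

theorem stmt8 (m : ℝ) (hm : 0 < m) :
    ∃ δm : ℝ, Filter.Tendsto (δE m) (nhdsWithin 0 (Set.Ioi (0 : ℝ))) (nhds δm) := by
  have hq0 : (0:ℝ) < min 1 (m / 2) := lt_min one_pos (half_pos hm)
  have hG : ContinuousWithinAt
      (fun q => ∫ p in Set.Ioi (0:ℝ), ∫ c in (-1:ℝ)..1, F m q p c) (Set.Ioi 0) 0 := by
    refine continuousWithinAt_of_dominated (bound := fun p => Bnd m p * 2)
      (Filter.Eventually.of_forall fun q => measP m q) ?_
      ((Bnd_integrable hm).mul_const 2) ?_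
    · have hev : ∀ᶠ q in nhdsWithin (0:ℝ) (Set.Ioi 0), q ∈ Set.Ioo (0:ℝ) (min 1 (m / 2)) :=
        Ioo_mem_nhdsGT_of_mem ⟨le_refl 0, hq0⟩
      filter_upwards [hev] with q hq
      refine Filter.Eventually.of_forall fun p => ?_
      have hqabs : |q| ≤ min 1 (m / 2) := by
        rw [abs_of_pos hq.1]; exact hq.2.le
      have key : ∀ c ∈ Set.uIoc (-1:ℝ) 1, ‖F m q p c‖ ≤ Bnd m p := by
        intro c hcmem
        have hcc : |c| ≤ 1 := by
          rw [Set.uIoc_of_le (by norm_num : (-1:ℝ) ≤ 1)] at hcmem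
          exact abs_le.mpr ⟨hcmem.1.le, hcmem.2⟩
        exact norm_F_le hm hqabs hcc p
      have h := intervalIntegral.norm_integral_le_of_norm_le_const key
      simpa [abs_of_nonneg] using h.trans_eq (by norm_num)
    · exact Filter.Eventually.of_forall fun p => (contq_integral hm p).continuousWithinAt
  have hω : Continuous (ω m) := by unfold ω; fun_prop
  have hω0 : ω m 0 = m := by unfold ω; simp [Real.sqrt_sq hm.le]
  have hA : ContinuousAt
      (fun q => Real.exp (-(10 / 3) * q ^ 2 - 2 * m) / (16 * (2 * Real.pi) ^ 5 * ω m q)) 0 := by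
    refine ContinuousAt.div (by fun_prop) (continuous_const.mul hω).continuousAt ?_
    rw [hω0]
    positivity
  refine ⟨δE m 0, ?_⟩
  have heq : δE m = fun q =>
      (Real.exp (-(10 / 3) * q ^ 2 - 2 * m) / (16 * (2 * Real.pi) ^ 5 * ω m q)) *
        ∫ p in Set.Ioi (0:ℝ), ∫ c in (-1:ℝ)..1, F m q p c := rfl
  rw [heq]
  exact (hA.continuousWithinAt.mul hG)
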